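/- Let h : ℝ → [0,∞) be an integrable log-concave function with ∫ h > 0 and M_h = sup_{x∈ℝ} h(x) < ∞, and let X be a random variable with density proportional to h. Then for every t ≥ 0, P(h(X) ≤ t) ≤ t / M_h. -/

import Mathlib

open MeasureTheory Set Real Filter

lemma lv_exp_Iic (c d b : ℝ) (hc : 0 < c) :
    IntegrableOn (fun x => Real.exp (c * x - d)) (Set.Iic b) ∧
    ∫ x in Set.Iic b, Real.exp (c * x - d) = Real.exp (c * b - d) / c := by
  have key : ∀ y : ℝ, ∫ x in y..b, Real.exp (c * x - d)
      = (Real.exp (c * b - d) - Real.exp (c * y - d)) / c := by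
    intro y
    rw [intervalIntegral.integral_comp_mul_sub Real.exp hc.ne' d, integral_exp]
    rw [smul_eq_mul]; ring
  have hci : ∀ y : ℝ, IntervalIntegrable (fun x => Real.exp (c * x - d)) volume y b := by
    intro y
    exact (Real.continuous_exp.comp (by continuity)).intervalIntegrable _ _
  have hnorm : ∀ x : ℝ, ‖Real.exp (c * x - d)‖ = Real.exp (c * x - d) := fun x =>
    norm_of_nonneg (Real.exp_pos _).le
  have hInt : IntegrableOn (fun x => Real.exp (c * x - d)) (Set.Iic b) := by
    refine integrableOn_Iic_of_intervalIntegral_norm_bounded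
      (Real.exp (c * b - d) / c) b (fun y => (hci y).1) tendsto_id ?_
    filter_upwards with y
    simp only [hnorm, key y, id]
    gcongr
    exact sub_le_self _ (Real.exp_pos _).le
  refine ⟨hInt, ?_⟩
  refine tendsto_nhds_unique
    (intervalIntegral_tendsto_integral_Iic _ hInt tendsto_id) ?_
  have h0 : Tendsto (fun y : ℝ => c * y - d) atBot atBot := by
    apply tendsto_atBot_add_const_right
    exact tendsto_id.const_mul_atBot hc
  have h1 : Tendsto (fun y : ℝ => Real.exp (c * y - d)) atBot (nhds 0) :=
    Real.tendsto_exp_atBot.comp h0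
  simp only [key, id]
  have := (h1.const_sub (Real.exp (c * b - d))).div_const c
  simpa using this

lemma lv_pt_upper (h : ℝ → ℝ) (h0 : ∀ x, 0 ≤ h x)
    (hlc : ∀ x y : ℝ, ∀ α : ℝ, α ∈ Set.Icc (0:ℝ) 1 →
      h x ^ α * h y ^ (1 - α) ≤ h (α * x + (1 - α) * y))
    {x s p t : ℝ} (hxs : x ≤ s) (hsp : s < p) (hst : h s ≤ t)
    (ht : 0 < t) (htp : t < h p) :
    h x ≤ h p * (t / h p) ^ ((p - x) / (p - s)) := by
  set m := h p with hm
  have hm0 : 0 < m := ht.trans htp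
  have hρ0 : 0 < t / m := div_pos ht hm0
  have hxp : x < p := lt_of_le_of_lt hxs hsp
  have hpx : 0 < p - x := by linarith
  have hps : 0 < p - s := by linarith
  set α := (p - s) / (p - x) with hα
  have hα0 : 0 < α := div_pos hps hpx
  have hα1 : α ≤ 1 := by
    rw [hα, div_le_one hpx]; linarith
  rcases le_or_gt (h x) 0 with hx0 | hx0
  · exact hx0.trans (by positivity)
  have hmid : α * x + (1 - α) * p = s := by
    field_simp [hα]
    have e : α * (p - x) = p - s := by rw [hα]; exact div_mul_cancel₀ _ hpx.ne'
    linear_combination -e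
  have key : h x ^ α * m ^ (1 - α) ≤ t := by
    have := hlc x p α ⟨hα0.le, hα1⟩
    rw [hmid] at this
    exact this.trans hst
  have hxα : h x ^ α ≤ (t / m) * m ^ α := by
    have hmpow : (0:ℝ) < m ^ (1 - α) := rpow_pos_of_pos hm0 _
    rw [← le_div_iff₀ hmpow] at key
    calc h x ^ α ≤ t / m ^ (1 - α) := key
      _ = (t / m) * m ^ α := by
          rw [show m ^ (1 - α) = m / m ^ α by
            rw [Real.rpow_sub hm0, Real.rpow_one], div_div_eq_mul_div]
          ring
  have h1 : h x = (h x ^ α) ^ α⁻¹ := by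
    rw [← Real.rpow_mul hx0.le, mul_inv_cancel₀ hα0.ne', Real.rpow_one]
  have h2 : ((t / m) * m ^ α) ^ α⁻¹ = m * (t / m) ^ α⁻¹ := by
    rw [Real.mul_rpow hρ0.le (rpow_pos_of_pos hm0 _).le,
      ← Real.rpow_mul hm0.le, mul_inv_cancel₀ hα0.ne', Real.rpow_one]
    ring
  have h3 : α⁻¹ = (p - x) / (p - s) := by
    rw [hα, inv_div]
  calc h x = (h x ^ α) ^ α⁻¹ := h1
    _ ≤ ((t / m) * m ^ α) ^ α⁻¹ :=
        Real.rpow_le_rpow (rpow_nonneg hx0.le _) hxα (inv_nonneg.mpr hα0.le)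
    _ = m * (t / m) ^ α⁻¹ := h2
    _ = m * (t / m) ^ ((p - x) / (p - s)) := by rw [h3]

lemma lv_pt_lower (h : ℝ → ℝ) (h0 : ∀ x, 0 ≤ h x)
    (hlc : ∀ x y : ℝ, ∀ α : ℝ, α ∈ Set.Icc (0:ℝ) 1 →
      h x ^ α * h y ^ (1 - α) ≤ h (α * x + (1 - α) * y))
    {s y p t : ℝ} (hsy : s ≤ y) (hyp : y ≤ p) (hsp : s < p) (hts : t ≤ h s)
    (ht : 0 < t) (htp : t < h p) :
    h p * (t / h p) ^ ((p - y) / (p - s)) ≤ h y := by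
  set m := h p with hm
  have hm0 : 0 < m := ht.trans htp
  set β := (p - y) / (p - s) with hβ
  have hps : 0 < p - s := by linarith
  have hβ0 : 0 ≤ β := by
    apply div_nonneg (by linarith) hps.le
  have hβ1 : β ≤ 1 := by
    rw [hβ, div_le_one hps]; linarith
  have hmid : β * s + (1 - β) * p = y := by
    field_simp [hβ]
    have e : β * (p - s) = p - y := by rw [hβ]; exact div_mul_cancel₀ _ hps.ne'
    linear_combination -e
  have e1 : m * (t / m) ^ β = t ^ β * m ^ (1 - β) := by
    rw [Real.div_rpow ht.le hm0.le,
      show m ^ (1 - β) = m / m ^ β by rw [Real.rpow_sub hm0, Real.rpow_one]]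
    field_simp
  calc m * (t / m) ^ β = t ^ β * m ^ (1 - β) := e1
    _ ≤ h s ^ β * h p ^ (1 - β) :=
        mul_le_mul_of_nonneg_right (Real.rpow_le_rpow ht.le hts hβ0)
          (Real.rpow_nonneg (h0 p) _)
    _ ≤ h y := by
        have := hlc s p β ⟨hβ0, hβ1⟩
        rwa [hmid] at this

set_option maxHeartbeats 1000000 in
lemma lv_left (h : ℝ → ℝ) (h0 : ∀ x, 0 ≤ h x)
    (hlc : ∀ x y : ℝ, ∀ α : ℝ, α ∈ Set.Icc (0:ℝ) 1 →
      h x ^ α * h y ^ (1 - α) ≤ h (α * x + (1 - α) * y))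
    (hint : Integrable h) (Mh : ℝ) (hb : ∀ x, h x ≤ Mh)
    (p t : ℝ) (ht : 0 < t) (htp : t < h p) :
    ∃ A : Set ℝ, MeasurableSet A ∧ {x | x < p ∧ h x ≤ t} ⊆ A ∧ A ⊆ Set.Iio p ∧
      ∫ x in A, h x ≤ (t / h p) * ∫ x in Set.Iic p, h x := by
  set m := h p with hm
  have hm0 : 0 < m := ht.trans htp
  set ρ := t / m with hρ
  have hρ0 : 0 < ρ := div_pos ht hm0
  have hρ1 : ρ < 1 := (div_lt_one hm0).2 htp
  set L := Real.log (m / t) with hL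
  have hL0 : 0 < L := Real.log_pos ((one_lt_div ht).2 htp)
  have hlogρ : Real.log ρ = -L := by
    rw [hρ, show t / m = (m / t)⁻¹ by rw [inv_div], Real.log_inv, hL]
  have hRHSnn : 0 ≤ ρ * ∫ x in Set.Iic p, h x :=
    mul_nonneg hρ0.le (setIntegral_nonneg measurableSet_Iic fun x _ => h0 x)
  set S := {x : ℝ | x < p ∧ h x ≤ t} with hS
  rcases S.eq_empty_or_nonempty with hSe | hne
  · exact ⟨∅, MeasurableSet.empty, by rw [← hSe], empty_subset _, by simpa using hRHSnn⟩
  have hbdd : BddAbove S := ⟨p, fun x hx => hx.1.le⟩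
  set a := sSup S with ha
  have haS : ∀ x ∈ S, x ≤ a := fun x hx => le_csSup hbdd hx
  have hap : a ≤ p := csSup_le hne fun x hx => hx.1.le
  -- exp ↔ rpow conversion
  have hconv : ∀ s x : ℝ, s < p → ρ ^ ((p - x) / (p - s)) =
      Real.exp ((L / (p - s)) * x - (L / (p - s)) * p) := by
    intro s x hsp
    rw [Real.rpow_def_of_pos hρ0, hlogρ]
    congr 1
    have : p - s ≠ 0 := by intro hc; exact absurd hc (by linarith)
    field_simp
    ring
  rcases eq_or_lt_of_le hap with hape | halt
  · -- a = p : h vanishes on Iio p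
    refine ⟨Set.Iio p, measurableSet_Iio, fun x hx => hx.1, le_refl _, ?_⟩
    have hz : ∀ x < p, h x = 0 := by
      intro x hxp
      refine le_antisymm ?_ (h0 x)
      have hle : ∀ n : ℕ, h x ≤ m * ρ ^ (n : ℝ) := by
        intro n
        have hpx : 0 < p - x := by linarith
        have hlt' : max x (p - (p - x) / (n + 1)) < sSup S := by
          rw [← ha, hape]
          refine max_lt hxp ?_
          have : 0 < (p - x) / (n + 1) := by positivity
          linarith
        obtain ⟨s, hsS, hs⟩ := exists_lt_of_lt_csSup hne hlt'
        have hxs : x ≤ s := ((le_max_left _ _).trans_lt hs).le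
        have hsp : s < p := hsS.1
        have hups := lv_pt_upper h h0 hlc hxs hsp hsS.2 ht htp
        refine hups.trans (mul_le_mul_of_nonneg_left ?_ hm0.le)
        refine Real.rpow_le_rpow_of_exponent_ge hρ0 hρ1.le ?_
        have hps : 0 < p - s := by linarith
        have h2 : p - s < (p - x) / (n + 1) := by
          have := (le_max_right x (p - (p - x) / (n + 1))).trans_lt hs
          linarith
        rw [le_div_iff₀ hps]
        have h3 : (p - s) * ((n : ℝ) + 1) < p - x :=
          (lt_div_iff₀ (by positivity)).1 h2
        nlinarith [hps.le]
      have htend : Tendsto (fun n : ℕ => m * ρ ^ (n : ℝ)) atTop (nhds 0) := by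
        have : Tendsto (fun n : ℕ => ρ ^ n) atTop (nhds 0) :=
          tendsto_pow_atTop_nhds_zero_of_lt_one hρ0.le hρ1
        have := this.const_mul m
        rw [mul_zero] at this
        refine this.congr fun n => ?_
        rw [Real.rpow_natCast]
      exact ge_of_tendsto' htend hle
    have : ∫ x in Set.Iio p, h x = 0 := by
      rw [setIntegral_congr_fun measurableSet_Iio (fun x hx => hz x hx)]
      exact integral_zero _ _
    rw [this]; exact hRHSnn
  -- main case : a < p
  refine ⟨Set.Iic a, measurableSet_Iic, fun x hx => haS x hx, fun x hx => lt_of_le_of_lt hx halt, ?_⟩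
  set X := ∫ x in Set.Iic a, h x with hX
  set Y := ∫ x in Set.Ioc a p, h x with hY
  have hsplit : ∫ x in Set.Iic p, h x = X + Y := by
    rw [← Set.Iic_union_Ioc_eq_Iic hap]
    exact setIntegral_union (Set.Iic_disjoint_Ioc le_rfl) measurableSet_Ioc
      hint.integrableOn hint.integrableOn
  rw [hsplit]
  have hXnn : 0 ≤ X := setIntegral_nonneg measurableSet_Iic fun x _ => h0 x
  have hMh0 : 0 ≤ Mh := (h0 p).trans (hb p)
  set G := m * ρ * (1 - ρ) / L with hG
  have hG0 : 0 ≤ G := by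
    apply div_nonneg _ hL0.le
    apply mul_nonneg (mul_nonneg hm0.le hρ0.le) (by linarith)
  have key : ∀ δ : ℝ, 0 < δ → (1 - ρ) * X ≤ ρ * Y + δ * (2 * G + Mh) := by
    intro δ hδ
    -- choose s₁ ∈ S with a - δ < s₁
    obtain ⟨s₁, hs₁S, hs₁⟩ := exists_lt_of_lt_csSup hne (show a - δ < sSup S by rw [← ha]; linarith)
    have hs₁a : s₁ ≤ a := haS _ hs₁S
    have hs₁p : s₁ < p := hs₁S.1
    have hps₁ : 0 < p - s₁ := by linarith
    -- choose s₂ ∈ (a, min (a+δ) p)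
    set s₂ := min (a + δ) ((a + p) / 2) with hs₂def
    have has₂ : a < s₂ := lt_min (by linarith) (by linarith)
    have hs₂p : s₂ < p := (min_le_right _ _).trans_lt (by linarith)
    have hs₂a : s₂ ≤ a + δ := min_le_left _ _
    have hps₂ : 0 < p - s₂ := by linarith
    have hts₂ : t < h s₂ := by
      by_contra hcon
      push_neg at hcon
      exact absurd (haS s₂ ⟨hs₂p, hcon⟩) (not_le.mpr has₂)
    -- upper bound for X
    set c₁ := L / (p - s₁) with hc₁def
    have hc₁ : 0 < c₁ := div_pos hL0 hps₁
    have h1ρ : 0 < 1 - ρ := by linarith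
    have hexpρ : Real.exp (c₁ * s₁ - c₁ * p) = ρ := by
      rw [show c₁ * s₁ - c₁ * p = -L by rw [hc₁def]; field_simp; ring,
        Real.exp_neg, hL, Real.exp_log (div_pos hm0 ht), inv_div]
    have hXbound : X ≤ G / (1 - ρ) * (p - s₁) + Mh * δ := by
      have hsplitX : X = (∫ x in Set.Iic s₁, h x) + ∫ x in Set.Ioc s₁ a, h x := by
        rw [hX, ← Set.Iic_union_Ioc_eq_Iic hs₁a]
        exact setIntegral_union (Set.Iic_disjoint_Ioc le_rfl) measurableSet_Ioc
          hint.integrableOn hint.integrableOn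
      have hIexp := lv_exp_Iic c₁ (c₁ * p) s₁ hc₁
      have bound1 : (∫ x in Set.Iic s₁, h x)
          ≤ ∫ x in Set.Iic s₁, m * Real.exp (c₁ * x - c₁ * p) := by
        refine setIntegral_mono_on hint.integrableOn (hIexp.1.const_mul m)
          measurableSet_Iic fun x hx => ?_
        have := lv_pt_upper h h0 hlc (hx : x ≤ s₁) hs₁p hs₁S.2 ht htp
        rwa [hconv s₁ x hs₁p] at this
      have val1 : ∫ x in Set.Iic s₁, m * Real.exp (c₁ * x - c₁ * p)
          = G / (1 - ρ) * (p - s₁) := by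
        rw [integral_const_mul, hIexp.2, hexpρ, hG, hc₁def]
        field_simp
      have bound2 : (∫ x in Set.Ioc s₁ a, h x) ≤ Mh * δ := by
        have : (∫ x in Set.Ioc s₁ a, h x) ≤ ∫ _x in Set.Ioc s₁ a, Mh := by
          refine setIntegral_mono_on hint.integrableOn ?_ measurableSet_Ioc
            fun x _ => hb x
          exact integrableOn_const measure_Ioc_lt_top.ne
        refine this.trans ?_
        rw [setIntegral_const, Measure.real, Real.volume_Ioc, smul_eq_mul,
          ENNReal.toReal_ofReal (by linarith)]
        nlinarith
      linarith [bound1.trans_eq val1, bound2, hsplitX.le]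
    -- lower bound for Y
    have hYbound : G / ρ * (p - s₂) ≤ Y := by
      set c₂ := L / (p - s₂) with hc₂def
      have hc₂ : 0 < c₂ := div_pos hL0 hps₂
      have hexpρ₂ : Real.exp (c₂ * s₂ - c₂ * p) = ρ := by
        rw [show c₂ * s₂ - c₂ * p = -L by rw [hc₂def]; field_simp; ring,
          Real.exp_neg, hL, Real.exp_log (div_pos hm0 ht), inv_div]
      have hIexpp := lv_exp_Iic c₂ (c₂ * p) p hc₂
      have hIexps := lv_exp_Iic c₂ (c₂ * p) s₂ hc₂
      have hintg' : IntegrableOn (fun x => m * Real.exp (c₂ * x - c₂ * p))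
          (Set.Iic p) := hIexpp.1.const_mul m
      have hintg : IntegrableOn (fun x => m * Real.exp (c₂ * x - c₂ * p))
          (Set.Ioc s₂ p) := hintg'.mono_set Set.Ioc_subset_Iic_self
      have hsplitg : (∫ x in Set.Ioc s₂ p, m * Real.exp (c₂ * x - c₂ * p))
          = G / ρ * (p - s₂) := by
        have : (∫ x in Set.Iic p, m * Real.exp (c₂ * x - c₂ * p))
            = (∫ x in Set.Iic s₂, m * Real.exp (c₂ * x - c₂ * p))
              + ∫ x in Set.Ioc s₂ p, m * Real.exp (c₂ * x - c₂ * p) := by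
          rw [← Set.Iic_union_Ioc_eq_Iic hs₂p.le]
          exact setIntegral_union (Set.Iic_disjoint_Ioc le_rfl) measurableSet_Ioc
            (hintg'.mono_set (Set.Iic_subset_Iic.mpr hs₂p.le)) hintg
        have e : (∫ x in Set.Iic p, m * Real.exp (c₂ * x - c₂ * p))
            - (∫ x in Set.Iic s₂, m * Real.exp (c₂ * x - c₂ * p))
            = G / ρ * (p - s₂) := by
          rw [integral_const_mul, integral_const_mul, hIexpp.2, hIexps.2, hexpρ₂,
            show c₂ * p - c₂ * p = 0 by ring, Real.exp_zero, hG, hc₂def]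
          field_simp
        linarith
      have bound3 : (∫ x in Set.Ioc s₂ p, m * Real.exp (c₂ * x - c₂ * p))
          ≤ ∫ x in Set.Ioc s₂ p, h x := by
        refine setIntegral_mono_on hintg hint.integrableOn measurableSet_Ioc
          fun x hx => ?_
        have := lv_pt_lower h h0 hlc hx.1.le hx.2 hs₂p hts₂.le ht htp
        rwa [hconv s₂ x hs₂p] at this
      have bound4 : (∫ x in Set.Ioc s₂ p, h x) ≤ Y := by
        rw [hY]
        refine setIntegral_mono_set hint.integrableOn
          (Filter.Eventually.of_forall fun x => h0 x)
          (HasSubset.Subset.eventuallyLE (Set.Ioc_subset_Ioc_left has₂.le))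
      linarith [hsplitg ▸ bound3, bound4]
    -- combine
    have e3 : (1 - ρ) * X ≤ G * (p - s₁) + Mh * δ := by
      have e4 := mul_le_mul_of_nonneg_left hXbound h1ρ.le
      have e5 : (1 - ρ) * (G / (1 - ρ) * (p - s₁) + Mh * δ)
          = G * (p - s₁) + (1 - ρ) * (Mh * δ) := by
        field_simp
      nlinarith [mul_nonneg hMh0 hδ.le, mul_nonneg (mul_nonneg hρ0.le hMh0) hδ.le]
    have e6 : G * (p - s₂) ≤ ρ * Y := by
      have := mul_le_mul_of_nonneg_left hYbound hρ0.le
      calc G * (p - s₂) = ρ * (G / ρ * (p - s₂)) := by field_simp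
        _ ≤ ρ * Y := this
    have e7 : G * (s₂ - s₁) ≤ G * (2 * δ) := mul_le_mul_of_nonneg_left (by linarith) hG0
    nlinarith [e3, e6, e7]
  -- conclude via ε-argument
  have hfinal : (1 - ρ) * X ≤ ρ * Y := by
    refine le_of_forall_pos_le_add fun ε hε => ?_
    have hK : 0 < 2 * G + Mh + 1 := by linarith
    have := key (ε / (2 * G + Mh + 1)) (by positivity)
    refine this.trans ?_
    have : ε / (2 * G + Mh + 1) * (2 * G + Mh) ≤ ε := by
      rw [div_mul_eq_mul_div, div_le_iff₀ hK]
      nlinarith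
    linarith
  linarith

lemma lv_right (h : ℝ → ℝ) (h0 : ∀ x, 0 ≤ h x)
    (hlc : ∀ x y : ℝ, ∀ α : ℝ, α ∈ Set.Icc (0:ℝ) 1 →
      h x ^ α * h y ^ (1 - α) ≤ h (α * x + (1 - α) * y))
    (hint : Integrable h) (Mh : ℝ) (hb : ∀ x, h x ≤ Mh)
    (p t : ℝ) (ht : 0 < t) (htp : t < h p) :
    ∃ A : Set ℝ, MeasurableSet A ∧ {x | p < x ∧ h x ≤ t} ⊆ A ∧ A ⊆ Set.Ioi p ∧
      ∫ x in A, h x ≤ (t / h p) * ∫ x in Set.Ioi p, h x := by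
  set g : ℝ → ℝ := fun x => h (-x) with hg
  have g0 : ∀ x, 0 ≤ g x := fun x => h0 _
  have glc : ∀ x y : ℝ, ∀ α : ℝ, α ∈ Set.Icc (0:ℝ) 1 →
      g x ^ α * g y ^ (1 - α) ≤ g (α * x + (1 - α) * y) := by
    intro x y α hα
    have := hlc (-x) (-y) α hα
    rwa [show α * -x + (1 - α) * -y = -(α * x + (1 - α) * y) by ring] at this
  have gint : Integrable g := hint.comp_neg
  have gb : ∀ x, g x ≤ Mh := fun x => hb _
  have gtp : t < g (-p) := by rw [hg]; simpa using htp
  obtain ⟨A, hAm, hAs, hAio, hAint⟩ := lv_left g g0 glc gint Mh gb (-p) t ht gtp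
  refine ⟨Neg.neg ⁻¹' A, hAm.preimage measurable_neg, ?_, ?_, ?_⟩
  · intro x hx
    have : -x ∈ {y : ℝ | y < -p ∧ g y ≤ t} := ⟨by linarith [hx.1], by simpa [hg] using hx.2⟩
    exact hAs this
  · intro x hx
    have := hAio hx
    simp only [Set.mem_Iio] at this
    exact Set.mem_Ioi.2 (by linarith)
  · have e1 : ∫ x in Neg.neg ⁻¹' A, h x = ∫ x in A, g x := by
      have key := measurableEmbedding_neg.setIntegral_map (μ := (volume : Measure ℝ))
        (g := h) (Neg.neg ⁻¹' A)
      rw [Measure.map_neg_eq_self (volume : Measure ℝ)] at key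
      rw [key]
      congr 1
      ext x
      simp
    have e2 : ∫ x in Set.Iic (-p), g x = ∫ x in Set.Ioi p, h x := by
      rw [hg]
      rw [integral_comp_neg_Iic (-p) h, neg_neg]
    rw [e1, ← e2]
    have : g (-p) = h p := by simp [hg]
    rw [← this]
    exact hAint

/-- (Lovász–Vempala, Lemma 5.6(a).) Let `h : ℝ → [0,∞)` be an
integrable log-concave function with `∫ h > 0` and supremum `M_h < ∞`, and let `X` have
density proportional to `h`.  Then for every `t ≥ 0`, `P(h(X) ≤ t) ≤ t / M_h`. -/
theorem logconcave_density_small_value_tail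
    (h : ℝ → ℝ) (h0 : ∀ x, 0 ≤ h x)
    (hlogconc : ∀ x y : ℝ, ∀ α : ℝ, α ∈ Set.Icc (0:ℝ) 1 →
      h x ^ α * h y ^ (1 - α) ≤ h (α * x + (1 - α) * y))
    (hint : Integrable h) (hpos : 0 < ∫ x, h x)
    (Mh : ℝ) (hMh : IsLUB (Set.range h) Mh) :
    ∀ t : ℝ, 0 ≤ t →
      ((ENNReal.ofReal (∫ x, h x))⁻¹ •
          volume.withDensity (fun x => ENNReal.ofReal (h x))) {x | h x ≤ t}
        ≤ ENNReal.ofReal (t / Mh) := by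
  have hb : ∀ x, h x ≤ Mh := fun x => hMh.1 ⟨x, rfl⟩
  set I : ℝ := ∫ x, h x with hI
  have hM0 : 0 < Mh := by
    by_contra hc
    push_neg at hc
    have hz : ∀ x, h x = 0 := fun x => le_antisymm ((hb x).trans hc) (h0 x)
    have : I = 0 := by rw [hI]; simp [hz]
    rw [hI] at this
    linarith
  set ν := volume.withDensity (fun x => ENNReal.ofReal (h x)) with hν
  have hI0 : (ENNReal.ofReal I) ≠ 0 := (ENNReal.ofReal_pos.2 hpos).ne'
  have hItop : (ENNReal.ofReal I) ≠ ⊤ := ENNReal.ofReal_ne_top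
  have htotal : ν Set.univ = ENNReal.ofReal I := by
    rw [hν, withDensity_apply _ MeasurableSet.univ, Measure.restrict_univ,
      ← ofReal_integral_eq_lintegral_ofReal hint (Filter.Eventually.of_forall h0)]
  have key : ∀ t' : ℝ, 0 < t' →
      ((ENNReal.ofReal I)⁻¹ • ν) {x | h x ≤ t'} ≤ ENNReal.ofReal (t' / Mh) := by
    intro t' ht'
    rcases le_or_gt Mh t' with hMt | htM
    · calc ((ENNReal.ofReal I)⁻¹ • ν) {x | h x ≤ t'}
          ≤ ((ENNReal.ofReal I)⁻¹ • ν) Set.univ := measure_mono (Set.subset_univ _)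
        _ = (ENNReal.ofReal I)⁻¹ * ν Set.univ := by simp [Measure.smul_apply]
        _ = 1 := by rw [htotal, ENNReal.inv_mul_cancel hI0 hItop]
        _ ≤ ENNReal.ofReal (t' / Mh) := by
            rw [ENNReal.one_le_ofReal]
            exact (one_le_div hM0).2 hMt
    · -- main case
      have step : ∀ p : ℝ, t' < h p →
          ν {x | h x ≤ t'} ≤ ENNReal.ofReal (t' / h p * I) := by
        intro p hp
        obtain ⟨AL, hALm, hALs, hALio, hALint⟩ :=
          lv_left h h0 hlogconc hint Mh hb p t' ht' hp
        obtain ⟨AR, hARm, hARs, hARio, hARint⟩ :=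
          lv_right h h0 hlogconc hint Mh hb p t' ht' hp
        have hcover : {x | h x ≤ t'} ⊆ AL ∪ AR := by
          intro x hx
          rcases lt_trichotomy x p with hlt | heq | hgt
          · exact Or.inl (hALs ⟨hlt, hx⟩)
          · exact absurd (heq ▸ hx) (not_le.2 hp)
          · exact Or.inr (hARs ⟨hgt, hx⟩)
        have hdisj : Disjoint AL AR := by
          rw [Set.disjoint_left]
          intro x hxL hxR
          have h1 := hALio hxL
          have h2 := hARio hxR
          simp only [Set.mem_Iio] at h1
          simp only [Set.mem_Ioi] at h2
          linarith
        have hTint : ∫ x in AL ∪ AR, h x = (∫ x in AL, h x) + ∫ x in AR, h x :=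
          setIntegral_union hdisj hARm hint.integrableOn hint.integrableOn
        have hsum : ∫ x in AL ∪ AR, h x ≤ t' / h p * I := by
          rw [hTint]
          have htot : (∫ x in Set.Iic p, h x) + ∫ x in Set.Ioi p, h x = I :=
            intervalIntegral.integral_Iic_add_Ioi hint.integrableOn hint.integrableOn
          have e : t' / h p * (∫ x in Set.Iic p, h x) + t' / h p * (∫ x in Set.Ioi p, h x)
              = t' / h p * I := by rw [← mul_add, htot]
          linarith [hALint, hARint]
        calc ν {x | h x ≤ t'} ≤ ν (AL ∪ AR) := measure_mono hcover
          _ = ∫⁻ x in AL ∪ AR, ENNReal.ofReal (h x) :=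
              withDensity_apply _ (hALm.union hARm)
          _ = ENNReal.ofReal (∫ x in AL ∪ AR, h x) :=
              (ofReal_integral_eq_lintegral_ofReal hint.integrableOn
                (ae_of_all _ fun x => h0 x)).symm
          _ ≤ ENNReal.ofReal (t' / h p * I) := ENNReal.ofReal_le_ofReal hsum
      set νS := ν {x | h x ≤ t'} with hνS
      have hνStop : νS ≠ ⊤ := by
        refine ne_top_of_le_ne_top hItop ?_
        rw [← htotal]
        exact measure_mono (Set.subset_univ _)
      set νr := νS.toReal with hνr
      have hνr0 : 0 ≤ νr := ENNReal.toReal_nonneg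
      have hm : ∀ m : ℝ, t' < m → m < Mh → νr ≤ t' / m * I := by
        intro m htm hmM
        obtain ⟨y, ⟨p, rfl⟩, hpy⟩ := (lt_isLUB_iff hMh).1 hmM
        have hνle := step p (htm.trans hpy)
        have h1 : νr ≤ t' / h p * I :=
          ENNReal.toReal_le_of_le_ofReal
            (mul_nonneg (div_nonneg ht'.le (h0 p)) hpos.le) hνle
        refine h1.trans (mul_le_mul_of_nonneg_right ?_ hpos.le)
        exact div_le_div_of_nonneg_left ht'.le (ht'.trans htm) hpy.le
      have hreal : νr ≤ t' / Mh * I := by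
        by_contra hcon
        push_neg at hcon
        have hνrpos : 0 < νr := lt_of_le_of_lt (by positivity) hcon
        have hkey : t' * I < νr * Mh := by
          rw [div_mul_eq_mul_div, div_lt_iff₀ hM0] at hcon
          linarith
        set m := max ((t' * I / νr + Mh) / 2) ((t' + Mh) / 2) with hmdef
        have hmM : m < Mh := by
          apply max_lt
          · have : t' * I / νr < Mh := (div_lt_iff₀ hνrpos).2 (by linarith)
            linarith
          · linarith
        have htm : t' < m := lt_of_lt_of_le (by linarith : t' < (t' + Mh) / 2)
          (le_max_right _ _)
        have hge : t' * I / νr < m := by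
          have : t' * I / νr < (t' * I / νr + Mh) / 2 := by
            have : t' * I / νr < Mh := (div_lt_iff₀ hνrpos).2 (by linarith)
            linarith
          exact this.trans_le (le_max_left _ _)
        have := hm m htm hmM
        have hmpos : 0 < m := ht'.trans htm
        rw [div_mul_eq_mul_div, le_div_iff₀ hmpos] at this
        rw [div_lt_iff₀ hνrpos] at hge
        nlinarith
      have hback : νS ≤ ENNReal.ofReal (t' / Mh * I) := by
        rw [← ENNReal.ofReal_toReal hνStop]
        exact ENNReal.ofReal_le_ofReal hreal
      calc ((ENNReal.ofReal I)⁻¹ • ν) {x | h x ≤ t'}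
          = (ENNReal.ofReal I)⁻¹ * νS := by simp [Measure.smul_apply, hνS]
        _ ≤ (ENNReal.ofReal I)⁻¹ * ENNReal.ofReal (t' / Mh * I) :=
            mul_le_mul_right hback _
        _ = ENNReal.ofReal (t' / Mh) := by
            rw [ENNReal.ofReal_mul (div_nonneg ht'.le hM0.le), mul_comm (ENNReal.ofReal (t'/Mh)),
              ← mul_assoc, ENNReal.inv_mul_cancel hI0 hItop, one_mul]
  intro t ht0
  rcases eq_or_lt_of_le ht0 with rfl | ht
  · rw [zero_div, ENNReal.ofReal_zero]
    refine ENNReal.le_of_forall_pos_le_add fun ε hε _ => ?_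
    rw [zero_add]
    have hε2 : 0 < Mh * (ε / 2 : ℝ) := by positivity
    calc ((ENNReal.ofReal I)⁻¹ • ν) {x | h x ≤ 0}
        ≤ ((ENNReal.ofReal I)⁻¹ • ν) {x | h x ≤ Mh * (ε / 2 : ℝ)} :=
          measure_mono fun x hx => le_trans hx hε2.le
      _ ≤ ENNReal.ofReal (Mh * (ε / 2 : ℝ) / Mh) := key _ hε2
      _ = ENNReal.ofReal ((ε : ℝ) / 2) := by
          rw [mul_comm, mul_div_assoc, div_self hM0.ne', mul_one]
      _ ≤ (ε : ENNReal) := by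
          rw [← ENNReal.ofReal_coe_nnreal]
          exact ENNReal.ofReal_le_ofReal (by
            have : (0:ℝ) ≤ (ε:ℝ) := ε.2
            linarith)
  · exact key t ht
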